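/- Let v₁, v₂, v₃ be positive real numbers, V₁, V₂, V₃ real numbers and c, c̃ real constants with c − c̃ > 0, satisfying the system (⋆), and assume the principal curvatures V₁/v₁, V₂/v₂, V₃/v₃ are pairwise distinct. Then 3v₁² ≠ 1 and 3v₃² ≠ 1 (i.e. 3vₖ² − δₖ ≠ 0 for k ∈ {1,3}). -/
import Mathlib


/-- under the system (⋆) with c − c̃ > 0, vᵢ > 0, and pairwise
distinct principal curvatures Vᵢ/vᵢ, one has 3v₁² ≠ 1 and 3v₃² ≠ 1. -/
theorem stmt_7 (v₁ v₂ v₃ V₁ V₂ V₃ c ct : ℝ)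
    (hv₁ : 0 < v₁) (hv₂ : 0 < v₂) (hv₃ : 0 < v₃) (hc : 0 < c - ct)
    (h0 : v₁ ^ 2 - v₂ ^ 2 + v₃ ^ 2 = 1)
    (h1 : v₁ * V₁ - v₂ * V₂ + v₃ * V₃ = 0)
    (h2 : V₁ ^ 2 - V₂ ^ 2 + V₃ ^ 2 = c - ct)
    (h3 : V₁ / v₁ + V₂ / v₂ + V₃ / v₃ = 0)
    (hd12 : V₁ / v₁ ≠ V₂ / v₂) (hd13 : V₁ / v₁ ≠ V₃ / v₃)
    (hd23 : V₂ / v₂ ≠ V₃ / v₃) :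
    3 * v₁ ^ 2 ≠ 1 ∧ 3 * v₃ ^ 2 ≠ 1 := by
  have hn₁ := hv₁.ne'
  have hn₂ := hv₂.ne'
  have hn₃ := hv₃.ne'
  have hB : V₁ * (v₂ * v₃) + V₂ * (v₁ * v₃) + V₃ * (v₁ * v₂) = 0 := by
    field_simp at h3
    linarith [h3]
  constructor
  · intro heq
    apply hd23
    have key : (v₁ ^ 2 + v₂ ^ 2) * (v₂ * V₃ - v₃ * V₂) = 0 := by
      linear_combination v₂ * v₃ * h1 - v₁ * hB + v₂ * V₃ * heq - v₂ * V₃ * h0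
    have hpos : (0:ℝ) < v₁ ^ 2 + v₂ ^ 2 := by positivity
    have := (mul_eq_zero.mp key).resolve_left hpos.ne'
    field_simp
    linarith
  · intro heq
    apply hd12
    have key : (v₂ ^ 2 + v₃ ^ 2) * (v₂ * V₁ - v₁ * V₂) = 0 := by
      linear_combination v₁ * v₂ * h1 - v₃ * hB + v₂ * V₁ * heq - v₂ * V₁ * h0
    have hpos : (0:ℝ) < v₂ ^ 2 + v₃ ^ 2 := by positivity
    have := (mul_eq_zero.mp key).resolve_left hpos.ne'
    field_simp
    linarith
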